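/- Let K be a field, E a K-vector space of finite dimension N+1 ≥ 1, and w a weight function on E. Then there exists a basis l_0, …, l_N of E adapted to w, i.e. such that for every α ∈ ℝ the sublevel subspace F^α = {x ∈ E : w(x) ≤ α} equals the K-linear span of {l_j : w(l_j) ≤ α}. -/

import Mathlib

/-- A weight function on a `K`-vector space `E` is a map `w : E → ℝ ∪ {−∞}` such that
(1) `w x = −∞` iff `x = 0`; (2) `w (t • x) = w x` for all nonzero `t : K`;
(3) `w (x + y) ≤ max (w x) (w y)`. -/
def IsWeightFunction (K : Type*) [Field K] {E : Type*} [AddCommGroup E] [Module K E]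
    (w : E → WithBot ℝ) : Prop :=
  (∀ x : E, w x = ⊥ ↔ x = 0) ∧
  (∀ (t : K) (x : E), t ≠ 0 → w (t • x) = w x) ∧
  (∀ x y : E, w (x + y) ≤ max (w x) (w y))

/-- A basis `b` of `E` is adapted to the weight function `w` if for every `α ∈ ℝ`, the
sublevel subspace `F^α = {x ∈ E : w x ≤ α}` equals the span of `{b j : w (b j) ≤ α}`. -/
def IsAdaptedBasis (K : Type*) [Field K] {E : Type*} [AddCommGroup E] [Module K E]
    {ι : Type*} (w : E → WithBot ℝ) (b : Module.Basis ι K E) : Prop :=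
  ∀ α : ℝ, {x : E | w x ≤ (α : WithBot ℝ)} =
    ↑(Submodule.span K (b '' {j : ι | w (b j) ≤ (α : WithBot ℝ)}))

section Aux

variable {K : Type*} [Field K] {E : Type*} [AddCommGroup E] [Module K E]

lemma IsWeightFunction.w0 {w : E → WithBot ℝ} (hw : IsWeightFunction K w) : w 0 = ⊥ :=
  (hw.1 0).2 rfl

/-- The sublevel set as a submodule. -/
def sublevelSub (w : E → WithBot ℝ) (hw : IsWeightFunction K w) (α : WithBot ℝ) :
    Submodule K E where
  carrier := {x | w x ≤ α}
  zero_mem' := by simp [hw.w0]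
  add_mem' := fun hx hy => le_trans (hw.2.2 _ _) (max_le hx hy)
  smul_mem' := fun t x hx => by
    rcases eq_or_ne t 0 with rfl | ht
    · simp [hw.w0]
    · show w (t • x) ≤ α
      rw [hw.2.1 t x ht]; exact hx

lemma image_finite [FiniteDimensional K E] (w : E → WithBot ℝ) (hw : IsWeightFunction K w) :
    (w '' {x : E | x ≠ 0}).Finite := by
  set S := w '' {x : E | x ≠ 0} with hS
  have key : ∀ a ∈ S, ∀ b ∈ S, a < b →
      Module.finrank K (sublevelSub w hw a) < Module.finrank K (sublevelSub w hw b) := by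
    rintro a ha b ⟨y, hy, rfl⟩ hab
    apply Submodule.finrank_lt_finrank_of_lt
    refine lt_of_le_not_ge (fun x hx => le_trans hx hab.le) (fun h => ?_)
    exact absurd (h (le_refl (w y) : y ∈ sublevelSub w hw (w y))) (not_le.2 hab)
  apply Set.Finite.of_finite_image
    (f := fun α => Module.finrank K (sublevelSub w hw α))
  · refine Set.Finite.subset (Set.finite_Iic (Module.finrank K E)) ?_
    rintro _ ⟨a, _, rfl⟩
    exact Submodule.finrank_le _
  · intro a ha b hb hab
    by_contra hne
    rcases lt_or_gt_of_ne hne with h | h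
    · exact absurd hab (Nat.ne_of_lt (key a ha b hb h))
    · exact absurd hab.symm (Nat.ne_of_lt (key b hb a ha h))

lemma IsAdaptedBasis.reindex {ι ι' : Type*} {w : E → WithBot ℝ} {b : Module.Basis ι K E}
    (h : IsAdaptedBasis K w b) (e : ι ≃ ι') : IsAdaptedBasis K w (b.reindex e) := by
  intro α
  have himg : (b.reindex e) '' {j | w ((b.reindex e) j) ≤ (α : WithBot ℝ)} =
      b '' {i | w (b i) ≤ (α : WithBot ℝ)} := by
    ext x
    constructor
    · rintro ⟨j, hj, rfl⟩
      exact ⟨e.symm j, by simpa [Module.Basis.reindex_apply] using hj, by simp [Module.Basis.reindex_apply]⟩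
    · rintro ⟨i, hi, rfl⟩
      exact ⟨e i, by simpa [Module.Basis.reindex_apply] using hi, by simp [Module.Basis.reindex_apply]⟩
  rw [himg]
  exact h α

end Aux

lemma main_aux (K : Type*) [Field K] :
    ∀ (n : ℕ) (E : Type u) [AddCommGroup E] [Module K E] [FiniteDimensional K E]
      (w : E → WithBot ℝ), IsWeightFunction K w → Module.finrank K E = n →
      ∃ b : Module.Basis (Fin n) K E, IsAdaptedBasis K w b := by
  intro n
  induction n using Nat.strong_induction_on with
  | _ n IH =>
  intro E _ _ _ w hw hrank
  rcases n with _ | n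
  · -- dimension 0
    have hsub : Subsingleton E := Module.finrank_zero_iff.mp hrank
    refine ⟨Module.Basis.empty E, fun α => ?_⟩
    ext x
    have hx : x = 0 := Subsingleton.elim x 0
    simp [hx, hw.w0]
  · -- dimension n + 1
    have hnt : Nontrivial E := Module.nontrivial_of_finrank_pos (by omega : 0 < Module.finrank K E)
    obtain ⟨x₀, hx₀⟩ := exists_ne (0 : E)
    set S := w '' {x : E | x ≠ 0} with hSdef
    have hSfin : S.Finite := image_finite w hw
    have hSne : hSfin.toFinset.Nonempty := by
      rw [Set.Finite.toFinset_nonempty]; exact ⟨w x₀, x₀, hx₀, rfl⟩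
    set M := hSfin.toFinset.max' hSne with hMdef
    have hMmem : M ∈ S := by
      have := hSfin.toFinset.max'_mem hSne
      rwa [Set.Finite.mem_toFinset] at this
    obtain ⟨y₀, hy₀ne, hy₀⟩ := hMmem
    have hall : ∀ x : E, w x ≤ M := by
      intro x
      rcases eq_or_ne x 0 with rfl | hx
      · simp [hw.w0]
      · exact hSfin.toFinset.le_max' _ (by rw [Set.Finite.mem_toFinset]; exact ⟨x, hx, rfl⟩)
    have hbot : (⊥ : WithBot ℝ) < M := by
      rw [bot_lt_iff_ne_bot, ← hy₀]
      exact fun h => hy₀ne ((hw.1 y₀).1 h)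
    -- the strict sublevel submodule
    let F : Submodule K E :=
      { carrier := {x | w x < M}
        zero_mem' := by simpa [hw.w0] using hbot
        add_mem' := fun hx hy => lt_of_le_of_lt (hw.2.2 _ _) (max_lt hx hy)
        smul_mem' := fun t x hx => by
          rcases eq_or_ne t 0 with rfl | ht
          · simpa [hw.w0] using hbot
          · show w (t • x) < M
            rw [hw.2.1 t x ht]; exact hx }
    have hy₀F : y₀ ∉ F := by
      show ¬ w y₀ < M
      rw [hy₀]; exact lt_irrefl M
    have hFlt : F < ⊤ := lt_top_iff_ne_top.2 (fun h => hy₀F (h ▸ Submodule.mem_top))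
    have hm : Module.finrank K F < n + 1 := hrank ▸ Submodule.finrank_lt hFlt.ne
    -- weight function on F
    set w' : F → WithBot ℝ := fun v => w (v : E) with hw'def
    have hw' : IsWeightFunction K w' := by
      refine ⟨fun v => ?_, fun t v ht => ?_, fun v₁ v₂ => ?_⟩
      · rw [hw'def]; simp only; rw [hw.1]
        exact ⟨fun h => Subtype.ext h, fun h => by rw [h]; rfl⟩
      · exact hw.2.1 t (v : E) ht
      · exact hw.2.2 (v₁ : E) (v₂ : E)
    obtain ⟨b', hb'⟩ := IH (Module.finrank K F) hm F w' hw' rfl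
    obtain ⟨C, hC⟩ := Submodule.exists_isCompl F
    set c := Module.finBasis K C with hcdef
    set e := Submodule.prodEquivOfIsCompl F C hC with hedef
    set b0 := (b'.prod c).map e with hb0def
    have hb0l : ∀ j, b0 (Sum.inl j) = ((b' j : E)) := by
      intro j
      simp [hb0def, hedef, Module.Basis.prod_apply, Submodule.coe_prodEquivOfIsCompl']
    have hb0r : ∀ j, b0 (Sum.inr j) = ((c j : E)) := by
      intro j
      simp [hb0def, hedef, Module.Basis.prod_apply, Submodule.coe_prodEquivOfIsCompl']
    have hcM : ∀ j, w (b0 (Sum.inr j)) = M := by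
      intro j
      rw [hb0r]
      have hne : (c j : E) ≠ 0 := by
        simpa [Submodule.coe_eq_zero] using c.ne_zero j
      have hnF : (c j : E) ∉ F := by
        intro h
        have : (c j : E) ∈ F ⊓ C := ⟨h, (c j).2⟩
        rw [hC.inf_eq_bot] at this
        exact hne this
      have h1 : w (c j : E) ≤ M := hall _
      have h2 : ¬ w (c j : E) < M := hnF
      exact le_antisymm h1 (not_lt.1 h2)
    have hb0 : IsAdaptedBasis K w b0 := by
      intro α
      rcases le_or_gt M (α : WithBot ℝ) with hα | hα
      · have hset : {j | w (b0 j) ≤ (α : WithBot ℝ)} = Set.univ :=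
          Set.eq_univ_of_forall fun j => le_trans (hall _) hα
        rw [hset, Set.image_univ, b0.span_eq]
        ext x
        simpa using le_trans (hall x) hα
      · set J : Set (Fin (Module.finrank K F)) := {j | w ((b' j : E)) ≤ (α : WithBot ℝ)}
          with hJdef
        have stepA : {j | w (b0 j) ≤ (α : WithBot ℝ)} = Sum.inl '' J := by
          ext j
          rcases j with j | j
          · simp only [Set.mem_setOf_eq, hb0l]
            constructor
            · intro h; exact ⟨j, h, rfl⟩
            · rintro ⟨i, hi, hij⟩
              cases Sum.inl.inj hij
              exact hi
          · simp only [Set.mem_setOf_eq, hcM]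
            constructor
            · intro h; exact absurd (lt_of_lt_of_le hα h) (lt_irrefl _)
            · rintro ⟨i, _, hij⟩; exact absurd hij (by simp)
        have stepB : b0 '' (Sum.inl '' J) = (F.subtype) '' ((fun j => b' j) '' J) := by
          rw [Set.image_image, Set.image_image]
          exact Set.image_congr fun j _ => hb0l j
        have stepD : {v : F | w' v ≤ (α : WithBot ℝ)} =
            ↑(Submodule.span K ((fun j => b' j) '' J)) := hb' α
        have stepE : {x : E | w x ≤ (α : WithBot ℝ)} =
            Subtype.val '' {v : F | w' v ≤ (α : WithBot ℝ)} := by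
          ext x
          constructor
          · intro hx
            have hxF : x ∈ F := lt_of_le_of_lt hx hα
            exact ⟨⟨x, hxF⟩, hx, rfl⟩
          · rintro ⟨v, hv, rfl⟩
            exact hv
        rw [stepA, stepB, Submodule.span_image, Submodule.map_coe, ← stepD, stepE]
        rfl
    have hcard : Module.finrank K F + Module.finrank K C = n + 1 :=
      (Submodule.finrank_add_eq_of_isCompl hC).trans hrank
    exact ⟨b0.reindex (finSumFinEquiv.trans (finCongr hcard)), hb0.reindex _⟩

/-- Every weight function on a vector space of dimension `N+1` admits an adapted basis. -/
theorem exists_adapted_basis (K : Type*) [Field K] (E : Type*) [AddCommGroup E]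
    [Module K E] [FiniteDimensional K E] (N : ℕ) (hdim : Module.finrank K E = N + 1)
    (w : E → WithBot ℝ) (hw : IsWeightFunction K w) :
    ∃ b : Module.Basis (Fin (N + 1)) K E, IsAdaptedBasis K w b :=
  main_aux K (N + 1) E w hw hdim
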